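/- Let φ be a stability function on an abelian length category A and p ∈ P. Then the simple objects of the wide subcategory A_p (zero together with all φ-semistable objects of phase p) are exactly the φ-stable objects of phase p. -/

import Mathlib

open CategoryTheory CategoryTheory.Limits

universe u v

variable {C : Type u} [Category.{v} C] [Abelian C] {P : Type*} [LinearOrder P]

/-- The see-saw property for a stability function, on short exact sequences of nonzero objects. -/
def SeeSaw (φ : C → P) : Prop :=
  ∀ S : ShortComplex C, S.ShortExact →
    ¬ IsZero S.X₁ → ¬ IsZero S.X₂ → ¬ IsZero S.X₃ →
    (φ S.X₁ < φ S.X₂ ∧ φ S.X₂ < φ S.X₃) ∨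
    (φ S.X₃ < φ S.X₂ ∧ φ S.X₂ < φ S.X₁) ∨
    (φ S.X₁ = φ S.X₂ ∧ φ S.X₂ = φ S.X₃)

/-- A stability function is constant on isomorphism classes. -/
def IsoInvariant (φ : C → P) : Prop := ∀ ⦃M N : C⦄, (M ≅ N) → φ M = φ N

/-- `M` is φ-semistable: every nonzero proper subobject has phase ≤ φ M. -/
def Semistable (φ : C → P) (M : C) : Prop :=
  ∀ ⦃L : C⦄ (i : L ⟶ M), Mono i → ¬ IsZero L → ¬ IsIso i → φ L ≤ φ M

/-- `M` is φ-stable: every nonzero proper subobject has phase < φ M. -/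
def Stable (φ : C → P) (M : C) : Prop :=
  ∀ ⦃L : C⦄ (i : L ⟶ M), Mono i → ¬ IsZero L → ¬ IsIso i → φ L < φ M

/-- The class `A_p` of the zero objects and the φ-semistable objects of phase exactly `p`. -/
def Ap {C : Type u} [Category.{v} C] [Abelian C] {P : Type*} [LinearOrder P]
    (φ : C → P) (p : P) (M : C) : Prop :=
  IsZero M ∨ (Semistable φ M ∧ φ M = p)

/-- The simple objects of the wide subcategory `A_p` (nonzero objects of `A_p` with no
nonzero proper subobject lying in `A_p`) are exactly the φ-stable objects of phase `p`. -/
theorem simple_in_Ap_iff_stable {C : Type u} [Category.{v} C] [Abelian C]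
    [∀ X : C, IsNoetherianObject X] [∀ X : C, IsArtinianObject X]
    {P : Type*} [LinearOrder P] (φ : C → P)
    (hss : SeeSaw φ) (hiso : IsoInvariant φ) (p : P) (M : C) :
    (Ap φ p M ∧ ¬ IsZero M ∧
        ∀ ⦃L : C⦄ (i : L ⟶ M), Mono i → Ap φ p L → ¬ IsZero L → IsIso i) ↔
      (¬ IsZero M ∧ Stable φ M ∧ φ M = p) := by
  constructor
  · rintro ⟨hAp, hM, hmax⟩
    have hsemi : Semistable φ M ∧ φ M = p := hAp.resolve_left hM
    refine ⟨hM, ?_, hsemi.2⟩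
    intro L i hi hL hni
    rcases lt_or_eq_of_le (hsemi.1 i hi hL hni) with h | h
    · exact h
    · exfalso
      apply hni
      apply hmax i hi _ hL
      refine Or.inr ⟨?_, h.trans hsemi.2⟩
      intro K j hj hK hnj
      have hmono : Mono (j ≫ i) := mono_comp j i
      have hcni : ¬ IsIso (j ≫ i) := by
        intro hiso
        haveI := hiso
        haveI : Epi i := epi_of_epi j i
        haveI := hi
        exact hni (isIso_of_mono_of_epi i)
      calc φ K ≤ φ M := hsemi.1 (j ≫ i) hmono hK hcni
        _ = φ L := h.symm
  · rintro ⟨hM, hst, hp⟩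
    refine ⟨Or.inr ⟨fun L i hi hL hni => (hst i hi hL hni).le, hp⟩, hM, ?_⟩
    intro L i hi hAL hL
    by_contra hni
    have hlt := hst i hi hL hni
    rcases hAL with h | ⟨_, hLp⟩
    · exact hL h
    · rw [hLp, hp] at hlt
      exact lt_irrefl p hlt
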